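/- arXiv:2601.23053 — 3 statements merged into one kernel-verified Lean document; each statement's English description precedes it below -/
import Mathlib

section
/- Let m > 0, let η, τ ∈ ℝ satisfy η² − τ² = 4, and let k, z ∈ ℝ with z² < m² + k² and z ≠ −m; set λ := √(k² + m² − z²). Then the determinant of the 2×2 complex matrix with first row (((η−τ)/2)·(λ − k)/(m + z), 1) and second row (i(η+τ)/2, i(λ + k)/(m + z)) vanishes if and only if η z + τ m = 0. Consequently, z⋆ := −τm/η is the only value of z in (−√(m²+k²), √(m²+k²)) for which the matching system for square-integrable solutions of the fiber Dirac equation admits a nontrivial solution. -/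
open Matrix Complex

noncomputable section

theorem critical_line_eigenvalue (m η τ : ℝ) (hm : 0 < m)
    (hcrit : η ^ 2 - τ ^ 2 = 4) (k z : ℝ)
    (hz : z ^ 2 < m ^ 2 + k ^ 2) (hz' : z ≠ -m)
    (lam : ℝ) (hlam : lam = Real.sqrt (k ^ 2 + m ^ 2 - z ^ 2)) :
    ((!![(((η : ℂ) - τ) / 2) * (((lam : ℂ) - k) / ((m : ℂ) + z)), 1;
        Complex.I * ((η : ℂ) + τ) / 2,
        Complex.I * (((lam : ℂ) + k) / ((m : ℂ) + z))]).det = 0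
      ↔ η * z + τ * m = 0) ∧
    ((!![(((η : ℂ) - τ) / 2) * (((lam : ℂ) - k) / ((m : ℂ) + z)), 1;
        Complex.I * ((η : ℂ) + τ) / 2,
        Complex.I * (((lam : ℂ) + k) / ((m : ℂ) + z))]).det = 0
      ↔ z = -(τ * m) / η) := by
  have hη : η ≠ 0 := by
    intro h
    nlinarith [sq_nonneg τ]
  have hmz : (m : ℂ) + z ≠ 0 := by
    intro h
    apply hz'
    have : ((z : ℂ)) = ((-m : ℝ) : ℂ) := by push_cast; linear_combination h
    exact_mod_cast this
  have hlam2 : (lam : ℝ) ^ 2 = k ^ 2 + m ^ 2 - z ^ 2 := by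
    rw [hlam, Real.sq_sqrt]; nlinarith
  have hlam2' : (lam : ℂ) ^ 2 = (k : ℂ) ^ 2 + m ^ 2 - z ^ 2 := by
    exact_mod_cast congrArg (fun x : ℝ => (x : ℂ)) hlam2
  have hdet : (!![(((η : ℂ) - τ) / 2) * (((lam : ℂ) - k) / ((m : ℂ) + z)), 1;
        Complex.I * ((η : ℂ) + τ) / 2,
        Complex.I * (((lam : ℂ) + k) / ((m : ℂ) + z))]).det
      = -Complex.I * ((η : ℂ) * z + τ * m) / ((m : ℂ) + z) := by
    rw [Matrix.det_fin_two_of]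
    field_simp
    ring_nf
    linear_combination ((η:ℂ) - τ) * hlam2'
  have key : (!![(((η : ℂ) - τ) / 2) * (((lam : ℂ) - k) / ((m : ℂ) + z)), 1;
        Complex.I * ((η : ℂ) + τ) / 2,
        Complex.I * (((lam : ℂ) + k) / ((m : ℂ) + z))]).det = 0
      ↔ η * z + τ * m = 0 := by
    rw [hdet]
    rw [div_eq_zero_iff]
    constructor
    · rintro (h | h)
      · have h2 : ((η * z + τ * m : ℝ) : ℂ) = 0 := by
          have hI : (Complex.I : ℂ) ≠ 0 := Complex.I_ne_zero
          push_cast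
          rcases mul_eq_zero.mp h with h' | h'
          · exact absurd (neg_eq_zero.mp h') hI
          · exact h'
        exact_mod_cast h2
      · exact absurd h hmz
    · intro h
      left
      have : ((η * z + τ * m : ℝ) : ℂ) = 0 := by exact_mod_cast h
      push_cast at this
      rw [this, mul_zero]
  refine ⟨key, key.trans ?_⟩
  rw [eq_div_iff hη]
  constructor <;> intro h <;> linarith
end
end

section
/- Let m > 0 and k, z ∈ ℝ with z² ≥ m² + k². If ψ : ℝ → ℂ² is differentiable, satisfies −i σ₁ ψ'(x) + k σ₂ ψ(x) + m σ₃ ψ(x) = z ψ(x) for all x ∈ ℝ, and is square-integrable (∫_ℝ ‖ψ(x)‖² dx < ∞), then ψ is identically zero. In other words, the fiber Dirac equation admits no nontrivial L² solutions for spectral parameters outside the gap (−√(m²+k²), √(m²+k²)). -/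
open Matrix Complex MeasureTheory

noncomputable section

/-- The Pauli matrix `σ₁`. -/
def pauli1 : Matrix (Fin 2) (Fin 2) ℂ := !![0, 1; 1, 0]

/-- The Pauli matrix `σ₂`. -/
def pauli2 : Matrix (Fin 2) (Fin 2) ℂ := !![0, -Complex.I; Complex.I, 0]

/-- The Pauli matrix `σ₃`. -/
def pauli3 : Matrix (Fin 2) (Fin 2) ℂ := !![1, 0; 0, -1]

private lemma hasDerivAt_normSq' {u : ℝ → ℂ} {u' : ℂ} {x : ℝ} (h : HasDerivAt u u' x) :
    HasDerivAt (fun t => Complex.normSq (u t)) (2 * ((starRingEnd ℂ) (u x) * u').re) x := by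
  have hre : HasDerivAt (fun t => (u t).re) u'.re x :=
    (Complex.reCLM.hasFDerivAt.comp_hasDerivAt x h)
  have him : HasDerivAt (fun t => (u t).im) u'.im x :=
    (Complex.imCLM.hasFDerivAt.comp_hasDerivAt x h)
  have h2 := (hre.mul hre).add (him.mul him)
  have key : (fun t => Complex.normSq (u t))
      = fun t => (u t).re*(u t).re + (u t).im*(u t).im := by
    funext t; simp [Complex.normSq_apply]
  rw [key]
  refine h2.congr_deriv (Eq.symm ?_)
  simp [Complex.mul_re]; ring

private lemma normSq_add_le' (a b : ℂ) :
    Complex.normSq (a + b) ≤ 2 * Complex.normSq a + 2 * Complex.normSq b := by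
  simp only [Complex.normSq_apply, Complex.add_re, Complex.add_im]
  nlinarith [sq_nonneg (a.re - b.re), sq_nonneg (a.im - b.im)]

theorem no_L2_solutions_outside_gap (m k z : ℝ) (hm : 0 < m)
    (hz : m ^ 2 + k ^ 2 ≤ z ^ 2) (ψ : ℝ → Fin 2 → ℂ)
    (hdiff : Differentiable ℝ ψ)
    (hode : ∀ x : ℝ,
      (-Complex.I) • pauli1.mulVec (deriv ψ x) + (k : ℂ) • pauli2.mulVec (ψ x)
        + (m : ℂ) • pauli3.mulVec (ψ x) = (z : ℂ) • ψ x)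
    (hL2 : Integrable (fun x : ℝ => ‖ψ x 0‖ ^ 2 + ‖ψ x 1‖ ^ 2)) :
    ∀ x : ℝ, ψ x = 0 := by
  intro x₀
  set f : ℝ → ℂ := fun t => ψ t 0 with hfdef
  set g : ℝ → ℂ := fun t => ψ t 1 with hgdef
  -- component derivatives from the ODE
  have hfd : ∀ x, HasDerivAt f (deriv ψ x 0) x := fun x =>
    (ContinuousLinearMap.proj 0 : (Fin 2 → ℂ) →L[ℝ] ℂ).hasFDerivAt.comp_hasDerivAt x
      (hdiff x).hasDerivAt
  have hgd : ∀ x, HasDerivAt g (deriv ψ x 1) x := fun x =>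
    (ContinuousLinearMap.proj 1 : (Fin 2 → ℂ) →L[ℝ] ℂ).hasFDerivAt.comp_hasDerivAt x
      (hdiff x).hasDerivAt
  have hcomp : ∀ x, deriv ψ x 0 = (k:ℂ) * f x + Complex.I*((z:ℂ)+m) * g x ∧
      deriv ψ x 1 = Complex.I*((z:ℂ)-m) * f x - (k:ℂ) * g x := by
    intro x
    have h1 := congrFun (hode x) 1
    have h0 := congrFun (hode x) 0
    simp [pauli1, pauli2, pauli3, mulVec, dotProduct, Fin.sum_univ_two] at h0 h1
    constructor
    · linear_combination Complex.I * h1 + (deriv ψ x 0 - (k:ℂ) * ψ x 0) * Complex.I_sq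
    · linear_combination Complex.I * h0 + (deriv ψ x 1 + (k:ℂ) * ψ x 1) * Complex.I_sq
  have hf : ∀ x, HasDerivAt f ((k:ℂ) * f x + Complex.I*((z:ℂ)+m) * g x) x := fun x =>
    (hcomp x).1 ▸ hfd x
  have hg : ∀ x, HasDerivAt g (Complex.I*((z:ℂ)-m) * f x - (k:ℂ) * g x) x := fun x =>
    (hcomp x).2 ▸ hgd x
  set W : ℝ := z^2 - m^2 - k^2 with hWdef
  have hWnn : 0 ≤ W := by simp only [hWdef]; linarith
  -- second derivatives
  have hF : ∀ x, HasDerivAt (fun t => (k:ℂ) * f t + Complex.I*((z:ℂ)+m) * g t)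
      (-(W:ℂ) * f x) x := by
    intro x
    have h := ((hf x).const_mul (k:ℂ)).add ((hg x).const_mul (Complex.I*((z:ℂ)+m)))
    refine h.congr_deriv (Eq.symm ?_)
    simp only [hWdef]
    push_cast
    linear_combination (-(z:ℂ)^2 + (m:ℂ)^2) * f x * Complex.I_sq
  have hG : ∀ x, HasDerivAt (fun t => Complex.I*((z:ℂ)-m) * f t - (k:ℂ) * g t)
      (-(W:ℂ) * g x) x := by
    intro x
    have h := ((hf x).const_mul (Complex.I*((z:ℂ)-m))).sub ((hg x).const_mul (k:ℂ))
    refine h.congr_deriv (Eq.symm ?_)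
    simp only [hWdef]
    push_cast
    linear_combination (-(z:ℂ)^2 + (m:ℂ)^2) * g x * Complex.I_sq
  -- conserved energy
  set E : ℝ → ℝ := fun x =>
    Complex.normSq ((k:ℂ) * f x + Complex.I*((z:ℂ)+m) * g x)
    + Complex.normSq (Complex.I*((z:ℂ)-m) * f x - (k:ℂ) * g x)
    + W * (Complex.normSq (f x) + Complex.normSq (g x)) with hEdef
  have hE : ∀ x, HasDerivAt E 0 x := by
    intro x
    have h1 := hasDerivAt_normSq' (hF x)
    have h2 := hasDerivAt_normSq' (hG x)
    have h3 := hasDerivAt_normSq' (hf x)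
    have h4 := hasDerivAt_normSq' (hg x)
    have h := (h1.add h2).add ((h3.add h4).const_mul W)
    refine h.congr_deriv (Eq.symm ?_)
    simp only [Complex.mul_re, Complex.mul_im, Complex.add_re, Complex.add_im,
      Complex.sub_re, Complex.sub_im, Complex.I_re, Complex.I_im, Complex.ofReal_re,
      Complex.ofReal_im, Complex.conj_re, Complex.conj_im, Complex.neg_re, Complex.neg_im]
    ring
  have hEconst : ∀ x, E x = E 0 := fun x =>
    is_const_of_deriv_eq_zero (fun y => (hE y).differentiableAt) (fun y => (hE y).deriv) x 0
  have hEnonneg : ∀ x, 0 ≤ E x := by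
    intro x
    have n1 := Complex.normSq_nonneg ((k:ℂ) * f x + Complex.I*((z:ℂ)+m) * g x)
    have n2 := Complex.normSq_nonneg (Complex.I*((z:ℂ)-m) * f x - (k:ℂ) * g x)
    have n3 := Complex.normSq_nonneg (f x)
    have n4 := Complex.normSq_nonneg (g x)
    have := mul_nonneg hWnn (add_nonneg n3 n4)
    simp only [hEdef]; linarith
  -- the L² hypothesis in normSq form
  have hH : Integrable (fun x => Complex.normSq (f x) + Complex.normSq (g x)) := by
    have : (fun x : ℝ => ‖ψ x 0‖ ^ 2 + ‖ψ x 1‖ ^ 2)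
        = fun x => Complex.normSq (f x) + Complex.normSq (g x) := by
      funext x
      simp [hfdef, hgdef, Complex.sq_norm]
    rwa [this] at hL2
  -- pointwise bound E ≤ C·H
  set C : ℝ := 2*k^2 + 2*(z+m)^2 + 2*(z-m)^2 + W with hCdef
  have hCpos : 0 < C := by nlinarith [sq_nonneg k, sq_nonneg (z+m), sq_nonneg (z-m), hm, hWnn]
  have hbound : ∀ x, E x ≤ C * (Complex.normSq (f x) + Complex.normSq (g x)) := by
    intro x
    have b1 := normSq_add_le' ((k:ℂ) * f x) (Complex.I*((z:ℂ)+m) * g x)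
    have b2 := normSq_add_le' (Complex.I*((z:ℂ)-m) * f x) (-((k:ℂ) * g x))
    have e1 : Complex.normSq ((k:ℂ) * f x) = k^2 * Complex.normSq (f x) := by
      rw [Complex.normSq_mul, Complex.normSq_ofReal]; ring
    have e2 : Complex.normSq (Complex.I*((z:ℂ)+m) * g x) = (z+m)^2 * Complex.normSq (g x) := by
      rw [Complex.normSq_mul, Complex.normSq_mul, Complex.normSq_I]
      have : ((z:ℂ)+m) = ((z+m : ℝ) : ℂ) := by push_cast; ring
      rw [this, Complex.normSq_ofReal]; ring
    have e3 : Complex.normSq (Complex.I*((z:ℂ)-m) * f x) = (z-m)^2 * Complex.normSq (f x) := by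
      rw [Complex.normSq_mul, Complex.normSq_mul, Complex.normSq_I]
      have : ((z:ℂ)-m) = ((z-m : ℝ) : ℂ) := by push_cast; ring
      rw [this, Complex.normSq_ofReal]; ring
    have e4 : Complex.normSq (-((k:ℂ) * g x)) = k^2 * Complex.normSq (g x) := by
      rw [Complex.normSq_neg, Complex.normSq_mul, Complex.normSq_ofReal]; ring
    have hsub : Complex.normSq (Complex.I*((z:ℂ)-m) * f x - (k:ℂ) * g x)
        = Complex.normSq (Complex.I*((z:ℂ)-m) * f x + -((k:ℂ) * g x)) := by
      rw [sub_eq_add_neg]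
    have n3 := Complex.normSq_nonneg (f x)
    have n4 := Complex.normSq_nonneg (g x)
    simp only [hEdef, hCdef]
    rw [hsub]
    nlinarith [b1, b2, mul_nonneg hWnn n3, mul_nonneg hWnn n4]
  -- E 0 must vanish
  have hE0 : E 0 = 0 := by
    rcases lt_or_ge 0 (E 0) with hpos | hle
    · exfalso
      have hmin : ∀ x, E 0 / C ≤ Complex.normSq (f x) + Complex.normSq (g x) := by
        intro x
        rw [div_le_iff₀ hCpos]
        calc E 0 = E x := (hEconst x).symm
          _ ≤ C * (Complex.normSq (f x) + Complex.normSq (g x)) := hbound x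
          _ = (Complex.normSq (f x) + Complex.normSq (g x)) * C := by ring
      have hint : Integrable (fun _ : ℝ => E 0 / C) :=
        hH.mono' aestronglyMeasurable_const (Filter.Eventually.of_forall fun x => by
          rw [Real.norm_eq_abs, abs_of_pos (by positivity)]; exact hmin x)
      rw [integrable_const_iff] at hint
      rcases hint with h | h
      · exact absurd h (ne_of_gt (by positivity))
      · exact absurd h (by intro h'; have := h'.measure_univ_lt_top; simp at this)
    · exact le_antisymm hle (hEnonneg 0)
  -- hence f' = g' = 0 everywhere
  have hfzero : ∀ x, (k:ℂ) * f x + Complex.I*((z:ℂ)+m) * g x = 0 ∧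
      Complex.I*((z:ℂ)-m) * f x - (k:ℂ) * g x = 0 := by
    intro x
    have hx : E x = 0 := by rw [hEconst x, hE0]
    have n1 := Complex.normSq_nonneg ((k:ℂ) * f x + Complex.I*((z:ℂ)+m) * g x)
    have n2 := Complex.normSq_nonneg (Complex.I*((z:ℂ)-m) * f x - (k:ℂ) * g x)
    have n3 := Complex.normSq_nonneg (f x)
    have n4 := Complex.normSq_nonneg (g x)
    have n5 := mul_nonneg hWnn (add_nonneg n3 n4)
    simp only [hEdef] at hx
    constructor
    · exact Complex.normSq_eq_zero.mp (by linarith)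
    · exact Complex.normSq_eq_zero.mp (by linarith)
  have hfc : ∀ x, f x = f 0 := by
    have hd : Differentiable ℝ f := fun x => (hf x).differentiableAt
    have hz : ∀ x, deriv f x = 0 := by
      intro x
      have h := hf x
      rw [(hfzero x).1] at h
      exact h.deriv
    exact fun x => is_const_of_deriv_eq_zero hd hz x 0
  have hgc : ∀ x, g x = g 0 := by
    have hd : Differentiable ℝ g := fun x => (hg x).differentiableAt
    have hz : ∀ x, deriv g x = 0 := by
      intro x
      have h := hg x
      rw [(hfzero x).2] at h
      exact h.deriv
    exact fun x => is_const_of_deriv_eq_zero hd hz x 0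
  -- a nonzero constant is not integrable
  have hconst : Integrable (fun _ : ℝ => Complex.normSq (f 0) + Complex.normSq (g 0)) :=
    hH.congr (Filter.Eventually.of_forall fun x => by
      show Complex.normSq (f x) + Complex.normSq (g x)
        = Complex.normSq (f 0) + Complex.normSq (g 0)
      rw [hfc x, hgc x])
  rw [integrable_const_iff] at hconst
  have hH0 : Complex.normSq (f 0) + Complex.normSq (g 0) = 0 := by
    rcases hconst with h | h
    · exact h
    · exact absurd h (by intro h'; have := h'.measure_univ_lt_top; simp at this)
  have n3 := Complex.normSq_nonneg (f 0)
  have n4 := Complex.normSq_nonneg (g 0)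
  have hf0 : f 0 = 0 := Complex.normSq_eq_zero.mp (by linarith)
  have hg0 : g 0 = 0 := Complex.normSq_eq_zero.mp (by linarith)
  funext i
  fin_cases i
  · show f x₀ = 0; rw [hfc x₀, hf0]
  · show g x₀ = 0; rw [hgc x₀, hg0]
end
end

section
/- Let m > 0, z ∈ (−m, m), k ∈ ℤ, and set κ := √(m² − z²) > 0. Define u_I(r) := I_k(κr) and v_I(r) := −i √((m−z)/(m+z)) · I_{k+1}(κr), and also u_K(r) := K_k(κr) and v_K(r) := +i √((m−z)/(m+z)) · K_{k+1}(κr). Then both pairs (u, v) = (u_I, v_I) and (u, v) = (u_K, v_K) satisfy, for every r > 0, the radial Dirac system i v'(r) + i((k+1)/r) v(r) − (m − z) u(r) = 0 and i u'(r) − i(k/r) u(r) + (m + z) v(r) = 0. -/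
open Complex MeasureTheory

noncomputable section

/-- Modified Bessel function of the first kind of integer order `k`. -/
def besselI (k : ℤ) (t : ℝ) : ℝ :=
  (1 / Real.pi) * ∫ θ in (0:ℝ)..Real.pi, Real.exp (t * Real.cos θ) * Real.cos (k * θ)

/-- Modified Bessel function of the second kind of integer order `k`. -/
def besselK (k : ℤ) (t : ℝ) : ℝ :=
  ∫ s in Set.Ioi (0:ℝ), Real.exp (-t * Real.cosh s) * Real.cosh (k * s)

/-! ### Elementary inequalities -/

lemma my_abs_sinh_le_cosh (x : ℝ) : |Real.sinh x| ≤ Real.cosh x := by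
  rw [Real.abs_sinh, ← Real.cosh_abs]
  rw [Real.sinh_eq, Real.cosh_eq]
  have := Real.exp_pos (-|x|)
  linarith

lemma my_cosh_le_exp_abs (x : ℝ) : Real.cosh x ≤ Real.exp |x| := by
  rw [Real.cosh_eq]
  have h1 : Real.exp x ≤ Real.exp |x| := Real.exp_le_exp.2 (le_abs_self x)
  have h2 : Real.exp (-x) ≤ Real.exp |x| := Real.exp_le_exp.2 (neg_le_abs x)
  linarith

lemma my_quad_le_cosh (x : ℝ) : 1 + x ^ 2 / 2 ≤ Real.cosh x := by
  have h : Real.cosh x = 1 + 2 * Real.sinh (x / 2) ^ 2 := by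
    have := Real.cosh_sq (x / 2)
    have h2 : Real.cosh x = 2 * Real.cosh (x/2) ^ 2 - 1 := by
      have := Real.cosh_two_mul (x/2); rw [show 2 * (x/2) = x by ring] at this; linarith
    linarith
  rw [h]
  have h3 : |x/2| ≤ Real.sinh |x/2| := Real.self_le_sinh_iff.2 (abs_nonneg _)
  have h4 : Real.sinh |x/2| = |Real.sinh (x/2)| := (Real.abs_sinh _).symm
  have h5 : (x/2)^2 ≤ Real.sinh (x/2) ^ 2 := by
    rw [← _root_.sq_abs (x/2), ← _root_.sq_abs (Real.sinh (x/2))]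
    exact pow_le_pow_left₀ (abs_nonneg _) (h4 ▸ h3) 2
  nlinarith

/-! ### Product-to-sum identities -/

lemma cosh_mul_cosh' (a b : ℝ) :
    Real.cosh a * Real.cosh b = (Real.cosh (a+b) + Real.cosh (a-b))/2 := by
  rw [Real.cosh_add, Real.cosh_sub]; ring

lemma sinh_mul_sinh' (a b : ℝ) :
    Real.sinh a * Real.sinh b = (Real.cosh (a+b) - Real.cosh (a-b))/2 := by
  rw [Real.cosh_add, Real.cosh_sub]; ring

lemma cos_mul_cos' (a b : ℝ) :
    Real.cos a * Real.cos b = (Real.cos (a+b) + Real.cos (a-b))/2 := by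
  rw [Real.cos_add, Real.cos_sub]; ring

lemma sin_mul_sin' (a b : ℝ) :
    Real.sin a * Real.sin b = (Real.cos (a-b) - Real.cos (a+b))/2 := by
  rw [Real.cos_add, Real.cos_sub]; ring

lemma key_prod (k : ℤ) (s : ℝ) : Real.cosh s * Real.cosh ((k:ℝ) * s)
    = (Real.cosh (((k:ℝ)+1)*s) + Real.cosh (((k:ℝ)-1)*s))/2 := by
  rw [cosh_mul_cosh', show s + (k:ℝ)*s = ((k:ℝ)+1)*s by ring,
    show s - (k:ℝ)*s = -(((k:ℝ)-1)*s) by ring, Real.cosh_neg]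

lemma key_prod_sinh (k : ℤ) (s : ℝ) : Real.sinh s * Real.sinh ((k:ℝ) * s)
    = (Real.cosh (((k:ℝ)+1)*s) - Real.cosh (((k:ℝ)-1)*s))/2 := by
  rw [sinh_mul_sinh', show s + (k:ℝ)*s = ((k:ℝ)+1)*s by ring,
    show s - (k:ℝ)*s = -(((k:ℝ)-1)*s) by ring, Real.cosh_neg]

lemma key_prodI (k : ℤ) (θ : ℝ) : Real.cos θ * Real.cos ((k:ℝ) * θ)
    = (Real.cos (((k:ℝ)+1)*θ) + Real.cos (((k:ℝ)-1)*θ))/2 := by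
  rw [cos_mul_cos', show θ + (k:ℝ)*θ = ((k:ℝ)+1)*θ by ring,
    show θ - (k:ℝ)*θ = -(((k:ℝ)-1)*θ) by ring, Real.cos_neg]

lemma key_prodI' (k : ℤ) (θ : ℝ) : Real.sin θ * Real.sin ((k:ℝ) * θ)
    = (Real.cos (((k:ℝ)-1)*θ) - Real.cos (((k:ℝ)+1)*θ))/2 := by
  rw [sin_mul_sin', show θ + (k:ℝ)*θ = ((k:ℝ)+1)*θ by ring,
    show θ - (k:ℝ)*θ = -(((k:ℝ)-1)*θ) by ring, Real.cos_neg]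

/-! ### Integrability for the `K` integrals -/

lemma master_integrable (c t : ℝ) (ht : 0 < t) :
    IntegrableOn (fun s => Real.exp (c * s - t * Real.cosh s)) (Set.Ioi (0:ℝ)) := by
  have hint : IntegrableOn (fun s => Real.exp ((c+1)^2/(2*t) - t) * Real.exp (-1 * s)) (Set.Ioi (0:ℝ)) :=
    (exp_neg_integrableOn_Ioi 0 one_pos).const_mul _
  refine Integrable.mono' hint ?_ ?_
  · exact (Real.continuous_exp.comp ((continuous_const.mul continuous_id).sub
      (continuous_const.mul Real.continuous_cosh))).aestronglyMeasurable
  · filter_upwards [ae_restrict_mem measurableSet_Ioi] with s hs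
    rw [Real.norm_eq_abs, abs_of_pos (Real.exp_pos _), ← Real.exp_add]
    apply Real.exp_le_exp.2
    have h1 : 1 + s^2/2 ≤ Real.cosh s := my_quad_le_cosh s
    have hs0 : (0:ℝ) < s := hs
    have key : (c+1)*s - t*s^2/2 ≤ (c+1)^2/(2*t) := by
      rw [le_div_iff₀ (by linarith : (0:ℝ) < 2*t)]
      nlinarith [sq_nonneg ((c+1) - t*s)]
    nlinarith [mul_le_mul_of_nonneg_left h1 ht.le]

lemma integrable_dom {t : ℝ} (ht : 0 < t) {f : ℝ → ℝ} (hf : Continuous f) (c C : ℝ)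
    (hb : ∀ s, 0 < s → |f s| ≤ C * Real.exp (c * s - t * Real.cosh s)) :
    IntegrableOn f (Set.Ioi (0:ℝ)) := by
  refine Integrable.mono' ((master_integrable c t ht).const_mul C) hf.aestronglyMeasurable ?_
  filter_upwards [ae_restrict_mem measurableSet_Ioi] with s hs
  exact hb s hs

lemma cosh_mul_le (c s : ℝ) (hs : 0 < s) : Real.cosh (c * s) ≤ Real.exp (|c| * s) := by
  have := my_cosh_le_exp_abs (c * s)
  rwa [abs_mul, abs_of_pos hs] at this

lemma integrable_K0 (c t : ℝ) (ht : 0 < t) :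
    IntegrableOn (fun s => Real.exp (-t * Real.cosh s) * Real.cosh (c * s)) (Set.Ioi (0:ℝ)) := by
  refine integrable_dom ht (by fun_prop) |c| 1 (fun s hs => ?_)
  have h1 := cosh_mul_le c s hs
  have h2 : (0:ℝ) < Real.cosh (c * s) := Real.cosh_pos _
  rw [abs_of_pos (by positivity), one_mul,
    show |c| * s - t * Real.cosh s = -t * Real.cosh s + |c| * s by ring, Real.exp_add]
  exact mul_le_mul_of_nonneg_left h1 (Real.exp_pos _).le

/-! ### Derivative and recurrence for `besselK` -/

lemma besselK_hasDerivAt (k : ℤ) {t : ℝ} (ht : 0 < t) :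
    HasDerivAt (besselK k) (-((besselK (k-1) t + besselK (k+1) t) / 2)) t := by
  have ht2 : 0 < t/2 := by linarith
  have main := hasDerivAt_integral_of_dominated_loc_of_deriv_le (μ := volume.restrict (Set.Ioi (0:ℝ)))
    (F := fun x s => Real.exp (-x * Real.cosh s) * Real.cosh ((k:ℝ) * s))
    (F' := fun x s => Real.exp (-x * Real.cosh s) * -Real.cosh s * Real.cosh ((k:ℝ) * s))
    (x₀ := t) (s := Metric.ball t (t/2))
    (bound := fun s => Real.cosh s * (Real.exp (-(t/2) * Real.cosh s) * Real.cosh ((k:ℝ) * s)))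
    (Metric.ball_mem_nhds t ht2)
    (Filter.Eventually.of_forall fun x => (by fun_prop : Continuous fun s => Real.exp (-x * Real.cosh s) * Real.cosh ((k:ℝ) * s)).aestronglyMeasurable)
    (integrable_K0 k t ht)
    ((by fun_prop : Continuous fun s => Real.exp (-t * Real.cosh s) * -Real.cosh s * Real.cosh ((k:ℝ) * s)).aestronglyMeasurable)
    ?_ ?_ ?_
  · have h2 : (∫ s in Set.Ioi (0:ℝ), Real.exp (-t * Real.cosh s) * -Real.cosh s * Real.cosh ((k:ℝ) * s))
        = -((besselK (k-1) t + besselK (k+1) t) / 2) := by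
      have hcongr : ∀ s : ℝ, Real.exp (-t * Real.cosh s) * -Real.cosh s * Real.cosh ((k:ℝ) * s)
          = (-(1/2:ℝ)) * (Real.exp (-t * Real.cosh s) * Real.cosh (((k+1:ℤ):ℝ) * s))
            + (-(1/2:ℝ)) * (Real.exp (-t * Real.cosh s) * Real.cosh (((k-1:ℤ):ℝ) * s)) := by
        intro s
        push_cast
        rw [show Real.exp (-t * Real.cosh s) * -Real.cosh s * Real.cosh ((k:ℝ) * s)
          = -(Real.exp (-t * Real.cosh s)) * (Real.cosh s * Real.cosh ((k:ℝ) * s)) by ring,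
          key_prod]
        ring
      rw [MeasureTheory.integral_congr_ae (Filter.Eventually.of_forall hcongr),
        MeasureTheory.integral_add (((integrable_K0 _ t ht)).const_mul _) (((integrable_K0 _ t ht)).const_mul _),
        integral_const_mul, integral_const_mul]
      unfold besselK
      ring
    rw [h2] at main
    exact main.2
  · filter_upwards [ae_restrict_mem measurableSet_Ioi] with s hs
    intro x hx
    have hxt : t/2 < x := by
      rw [Metric.mem_ball, Real.dist_eq, abs_lt] at hx; linarith [hx.1]
    have hcs : (0:ℝ) < Real.cosh s := Real.cosh_pos s
    have hks : (0:ℝ) < Real.cosh ((k:ℝ)*s) := Real.cosh_pos _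
    rw [Real.norm_eq_abs, abs_of_nonpos (by nlinarith [mul_pos (mul_pos (Real.exp_pos (-x * Real.cosh s)) hcs) hks])]
    have hexp : Real.exp (-x * Real.cosh s) ≤ Real.exp (-(t/2) * Real.cosh s) :=
      Real.exp_le_exp.2 (by nlinarith)
    calc -(Real.exp (-x * Real.cosh s) * -Real.cosh s * Real.cosh ((k:ℝ) * s))
        = Real.cosh s * (Real.exp (-x * Real.cosh s) * Real.cosh ((k:ℝ)*s)) := by ring
      _ ≤ Real.cosh s * (Real.exp (-(t/2) * Real.cosh s) * Real.cosh ((k:ℝ)*s)) := by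
          apply mul_le_mul_of_nonneg_left _ hcs.le
          exact mul_le_mul_of_nonneg_right hexp hks.le
  · refine integrable_dom ht2 (by fun_prop) (1 + |(k:ℝ)|) 1 (fun s hs => ?_)
    have h1 : Real.cosh s ≤ Real.exp s := by
      have := my_cosh_le_exp_abs s; rwa [abs_of_pos hs] at this
    have h2 := cosh_mul_le (k:ℝ) s hs
    have hcs : (0:ℝ) < Real.cosh s := Real.cosh_pos s
    have hks : (0:ℝ) < Real.cosh ((k:ℝ)*s) := Real.cosh_pos _
    rw [abs_of_pos (by positivity), one_mul,
      show (1 + |(k:ℝ)|) * s - t/2 * Real.cosh s = s + (|(k:ℝ)| * s + -(t/2) * Real.cosh s) by ring,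
      Real.exp_add, Real.exp_add]
    have := Real.exp_pos (-(t/2) * Real.cosh s)
    calc Real.cosh s * (Real.exp (-(t/2) * Real.cosh s) * Real.cosh ((k:ℝ)*s))
        ≤ Real.exp s * (Real.exp (-(t/2) * Real.cosh s) * Real.cosh ((k:ℝ)*s)) := by
          apply mul_le_mul_of_nonneg_right h1 (by positivity)
      _ ≤ Real.exp s * (Real.exp (|(k:ℝ)| * s) * Real.exp (-(t/2) * Real.cosh s)) := by
          apply mul_le_mul_of_nonneg_left _ (Real.exp_pos s).le
          rw [mul_comm (Real.exp (|(k:ℝ)| * s))]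
          exact mul_le_mul_of_nonneg_left h2 this.le
  · filter_upwards [ae_restrict_mem measurableSet_Ioi] with s _
    intro x _
    have h1 : HasDerivAt (fun x : ℝ => -x * Real.cosh s) (-Real.cosh s) x := by
      simpa using ((hasDerivAt_id x).neg.mul_const (Real.cosh s))
    exact (h1.exp).mul_const _

lemma besselK_recurrence (k : ℤ) {t : ℝ} (ht : 0 < t) :
    (k:ℝ) * besselK k t = (t/2) * (besselK (k+1) t - besselK (k-1) t) := by
  set f' : ℝ → ℝ := fun s => Real.exp (-t * Real.cosh s) * (-t * Real.sinh s) * Real.sinh ((k:ℝ)*s)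
      + Real.exp (-t * Real.cosh s) * (Real.cosh ((k:ℝ)*s) * (k:ℝ)) with hf'
  have hf'cont : Continuous f' := by fun_prop
  have hf'int : IntegrableOn f' (Set.Ioi (0:ℝ)) := by
    refine integrable_dom ht hf'cont (1 + |(k:ℝ)|) (t + |(k:ℝ)|) (fun s hs => ?_)
    have e1 : |Real.sinh s| ≤ Real.exp s := by
      have := (my_abs_sinh_le_cosh s).trans (my_cosh_le_exp_abs s)
      rwa [abs_of_pos hs] at this
    have e2 : |Real.sinh ((k:ℝ)*s)| ≤ Real.exp (|(k:ℝ)| * s) :=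
      (my_abs_sinh_le_cosh _).trans (cosh_mul_le _ _ hs)
    have e3 : Real.cosh ((k:ℝ)*s) ≤ Real.exp (|(k:ℝ)| * s) := cosh_mul_le _ _ hs
    have hek : (0:ℝ) < Real.exp (|(k:ℝ)| * s) := Real.exp_pos _
    have hep : (0:ℝ) < Real.exp (-t * Real.cosh s) := Real.exp_pos _
    have e4 : Real.exp (|(k:ℝ)| * s) ≤ Real.exp ((1 + |(k:ℝ)|) * s) :=
      Real.exp_le_exp.2 (by nlinarith [abs_nonneg (k:ℝ)])
    have b2 : (t * |Real.sinh s|) * |Real.sinh ((k:ℝ)*s)| ≤ (t * Real.exp s) * Real.exp (|(k:ℝ)| * s) :=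
      mul_le_mul (mul_le_mul_of_nonneg_left e1 ht.le) e2 (abs_nonneg _) (by positivity)
    calc |f' s| ≤ |Real.exp (-t * Real.cosh s) * (-t * Real.sinh s) * Real.sinh ((k:ℝ)*s)|
        + |Real.exp (-t * Real.cosh s) * (Real.cosh ((k:ℝ)*s) * (k:ℝ))| := abs_add_le _ _
      _ = Real.exp (-t * Real.cosh s) * ((t * |Real.sinh s|) * |Real.sinh ((k:ℝ)*s)|)
        + Real.exp (-t * Real.cosh s) * (Real.cosh ((k:ℝ)*s) * |(k:ℝ)|) := by
          rw [abs_mul, abs_mul, abs_mul, abs_mul, abs_mul, abs_of_pos hep,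
            abs_of_pos (Real.cosh_pos _), abs_neg, abs_of_pos ht]
          ring
      _ ≤ Real.exp (-t * Real.cosh s) * ((t * Real.exp s) * Real.exp (|(k:ℝ)| * s))
        + Real.exp (-t * Real.cosh s) * (Real.exp ((1 + |(k:ℝ)|) * s) * |(k:ℝ)|) :=
          add_le_add (mul_le_mul_of_nonneg_left b2 hep.le)
            (mul_le_mul_of_nonneg_left
              (mul_le_mul_of_nonneg_right (e3.trans e4) (abs_nonneg _)) hep.le)
      _ = (t + |(k:ℝ)|) * Real.exp ((1 + |(k:ℝ)|) * s - t * Real.cosh s) := by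
          rw [show (1 + |(k:ℝ)|) * s - t * Real.cosh s
            = (s + |(k:ℝ)| * s) + (-t * Real.cosh s) by ring, Real.exp_add, Real.exp_add,
            show (1 + |(k:ℝ)|) * s = s + |(k:ℝ)| * s by ring, Real.exp_add]
          ring
  have hderiv : ∀ x ∈ Set.Ici (0:ℝ), HasDerivAt
      (fun s => Real.exp (-t * Real.cosh s) * Real.sinh ((k:ℝ)*s)) (f' x) x := by
    intro x _
    have h1 : HasDerivAt (fun s : ℝ => -t * Real.cosh s) (-t * Real.sinh x) x :=
      (Real.hasDerivAt_cosh x).const_mul (-t)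
    have h2 : HasDerivAt (fun s : ℝ => Real.sinh ((k:ℝ)*s)) (Real.cosh ((k:ℝ)*x) * (k:ℝ)) x := by
      have : HasDerivAt (fun s : ℝ => (k:ℝ)*s) (k:ℝ) x := by
        simpa using (hasDerivAt_id x).const_mul (k:ℝ)
      simpa [mul_comm] using this.sinh
    have := (h1.exp.mul h2)
    simpa [hf', mul_comm, mul_assoc, mul_left_comm, Pi.mul_def] using this
  have htend : Filter.Tendsto (fun s => Real.exp (-t * Real.cosh s) * Real.sinh ((k:ℝ)*s))
      Filter.atTop (nhds 0) := by
    apply squeeze_zero_norm' _ Real.tendsto_exp_neg_atTop_nhds_zero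
    filter_upwards [Filter.eventually_ge_atTop (max 1 (2*(|(k:ℝ)|+1)/t))] with s hs
    have hs1 : (1:ℝ) ≤ s := le_trans (le_max_left _ _) hs
    have hs0 : (0:ℝ) < s := by linarith
    have hs2 : 2*(|(k:ℝ)|+1)/t ≤ s := le_trans (le_max_right _ _) hs
    have hts : 2*(|(k:ℝ)|+1) ≤ t * s := by
      rw [div_le_iff₀ ht] at hs2; linarith [hs2]
    have e2 : |Real.sinh ((k:ℝ)*s)| ≤ Real.exp (|(k:ℝ)| * s) :=
      (my_abs_sinh_le_cosh _).trans (cosh_mul_le _ _ hs0)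
    have hq := my_quad_le_cosh s
    rw [Real.norm_eq_abs, abs_mul, abs_of_pos (Real.exp_pos _)]
    calc Real.exp (-t * Real.cosh s) * |Real.sinh ((k:ℝ)*s)|
        ≤ Real.exp (-t * Real.cosh s) * Real.exp (|(k:ℝ)| * s) := by
          exact mul_le_mul_of_nonneg_left e2 (Real.exp_pos _).le
      _ = Real.exp (|(k:ℝ)| * s - t * Real.cosh s) := by rw [← Real.exp_add]; ring_nf
      _ ≤ Real.exp (-s) := by
          apply Real.exp_le_exp.2
          have : t * (1 + s^2/2) ≤ t * Real.cosh s := mul_le_mul_of_nonneg_left hq ht.le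
          nlinarith [abs_nonneg (k:ℝ)]
  have hzero : ∫ s in Set.Ioi (0:ℝ), f' s = 0 := by
    rw [integral_Ioi_of_hasDerivAt_of_tendsto' hderiv hf'int htend]
    simp
  have hsplit : ∀ s : ℝ, f' s = (-(t/2)) * (Real.exp (-t * Real.cosh s) * Real.cosh (((k+1:ℤ):ℝ) * s))
      + (t/2) * (Real.exp (-t * Real.cosh s) * Real.cosh (((k-1:ℤ):ℝ) * s))
      + (k:ℝ) * (Real.exp (-t * Real.cosh s) * Real.cosh ((k:ℝ) * s)) := by
    intro s
    rw [hf']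
    push_cast
    rw [show Real.exp (-t * Real.cosh s) * (-t * Real.sinh s) * Real.sinh ((k:ℝ)*s)
      = (-t) * Real.exp (-t * Real.cosh s) * (Real.sinh s * Real.sinh ((k:ℝ)*s)) by ring,
      key_prod_sinh]
    ring
  rw [MeasureTheory.integral_congr_ae (Filter.Eventually.of_forall hsplit)] at hzero
  have hI1 : Integrable (fun s : ℝ => (-(t/2)) * (Real.exp (-t * Real.cosh s) * Real.cosh (((k+1:ℤ):ℝ) * s))
      + (t/2) * (Real.exp (-t * Real.cosh s) * Real.cosh (((k-1:ℤ):ℝ) * s)))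
      (volume.restrict (Set.Ioi (0:ℝ))) :=
    ((integrable_K0 _ t ht).const_mul _).add ((integrable_K0 _ t ht).const_mul _)
  have hI2 : Integrable (fun s : ℝ => (k:ℝ) * (Real.exp (-t * Real.cosh s) * Real.cosh ((k:ℝ) * s)))
      (volume.restrict (Set.Ioi (0:ℝ))) := (integrable_K0 _ t ht).const_mul _
  have hI3 : Integrable (fun s : ℝ => (-(t/2)) * (Real.exp (-t * Real.cosh s) * Real.cosh (((k+1:ℤ):ℝ) * s)))
      (volume.restrict (Set.Ioi (0:ℝ))) := (integrable_K0 _ t ht).const_mul _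
  have hI4 : Integrable (fun s : ℝ => (t/2) * (Real.exp (-t * Real.cosh s) * Real.cosh (((k-1:ℤ):ℝ) * s)))
      (volume.restrict (Set.Ioi (0:ℝ))) := (integrable_K0 _ t ht).const_mul _
  rw [MeasureTheory.integral_add hI1 hI2, MeasureTheory.integral_add hI3 hI4,
    integral_const_mul, integral_const_mul, integral_const_mul] at hzero
  unfold besselK
  linarith [hzero]

/-! ### Derivative and recurrence for `besselI` -/

lemma besselI_hasDerivAt (k : ℤ) (t : ℝ) :
    HasDerivAt (besselI k) ((besselI (k-1) t + besselI (k+1) t) / 2) t := by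
  have main := intervalIntegral.hasDerivAt_integral_of_dominated_loc_of_deriv_le
    (μ := volume) (a := (0:ℝ)) (b := Real.pi) (x₀ := t) (s := Metric.ball t 1)
    (F := fun x θ => Real.exp (x * Real.cos θ) * Real.cos ((k:ℝ) * θ))
    (F' := fun x θ => Real.exp (x * Real.cos θ) * Real.cos θ * Real.cos ((k:ℝ) * θ))
    (bound := fun _ => Real.exp (|t| + 1))
    (Metric.ball_mem_nhds t one_pos)
    (Filter.Eventually.of_forall fun x => (Continuous.aestronglyMeasurable (by fun_prop)))
    ((Continuous.intervalIntegrable (by fun_prop) _ _))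
    (Continuous.aestronglyMeasurable (by fun_prop))
    ?_ (intervalIntegrable_const) ?_
  · have h2 : (∫ θ in (0:ℝ)..Real.pi, Real.exp (t * Real.cos θ) * Real.cos θ * Real.cos ((k:ℝ) * θ))
        = (∫ θ in (0:ℝ)..Real.pi, Real.exp (t * Real.cos θ) * Real.cos (((k+1:ℤ):ℝ) * θ)) / 2
        + (∫ θ in (0:ℝ)..Real.pi, Real.exp (t * Real.cos θ) * Real.cos (((k-1:ℤ):ℝ) * θ)) / 2 := by
      rw [← intervalIntegral.integral_div, ← intervalIntegral.integral_div,
        ← intervalIntegral.integral_add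
          ((Continuous.intervalIntegrable (by fun_prop) _ _))
          ((Continuous.intervalIntegrable (by fun_prop) _ _))]
      apply intervalIntegral.integral_congr
      intro θ _
      push_cast
      rw [show Real.exp (t * Real.cos θ) * Real.cos θ * Real.cos ((k:ℝ) * θ)
        = Real.exp (t * Real.cos θ) * (Real.cos θ * Real.cos ((k:ℝ) * θ)) by ring, key_prodI]
      ring
    unfold besselI
    have := (main.2).const_mul (1/Real.pi)
    rw [h2] at this
    exact this.congr_deriv (by ring)
  · filter_upwards with θ _ x hx
    rw [Metric.mem_ball, Real.dist_eq] at hx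
    have hx1 : |x| ≤ |t| + 1 := by
      have := abs_sub_abs_le_abs_sub x t
      linarith [this, le_of_lt hx]
    rw [Real.norm_eq_abs, abs_mul, abs_mul]
    have h1 : Real.exp (x * Real.cos θ) ≤ Real.exp (|t| + 1) := by
      apply Real.exp_le_exp.2
      calc x * Real.cos θ ≤ |x * Real.cos θ| := le_abs_self _
        _ = |x| * |Real.cos θ| := abs_mul _ _
        _ ≤ (|t|+1) * 1 := by
            apply mul_le_mul hx1 (Real.abs_cos_le_one θ) (abs_nonneg _) (by positivity)
        _ = |t| + 1 := mul_one _
    calc |Real.exp (x * Real.cos θ)| * |Real.cos θ| * |Real.cos ((k:ℝ)*θ)|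
        ≤ |Real.exp (x * Real.cos θ)| * 1 * 1 := by
          apply mul_le_mul (mul_le_mul le_rfl (Real.abs_cos_le_one θ) (abs_nonneg _) (abs_nonneg _))
            (Real.abs_cos_le_one _) (abs_nonneg _) (by positivity)
      _ = Real.exp (x * Real.cos θ) := by rw [mul_one, mul_one, abs_of_pos (Real.exp_pos _)]
      _ ≤ Real.exp (|t| + 1) := h1
  · filter_upwards with θ _ x _
    have h1 : HasDerivAt (fun x : ℝ => x * Real.cos θ) (Real.cos θ) x := by
      simpa using (hasDerivAt_id x).mul_const (Real.cos θ)
    exact (h1.exp).mul_const _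

lemma besselI_recurrence (k : ℤ) {t : ℝ} :
    (k:ℝ) * besselI k t = (t/2) * (besselI (k-1) t - besselI (k+1) t) := by
  set g : ℝ → ℝ := fun θ => Real.exp (t * Real.cos θ) * Real.sin ((k:ℝ)*θ) with hg
  set g' : ℝ → ℝ := fun θ => Real.exp (t * Real.cos θ) * (t * -Real.sin θ) * Real.sin ((k:ℝ)*θ)
      + Real.exp (t * Real.cos θ) * (Real.cos ((k:ℝ)*θ) * (k:ℝ)) with hg'
  have hderiv : ∀ θ ∈ Set.uIcc (0:ℝ) Real.pi, HasDerivAt g (g' θ) θ := by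
    intro θ _
    have h1 : HasDerivAt (fun θ : ℝ => t * Real.cos θ) (t * -Real.sin θ) θ :=
      (Real.hasDerivAt_cos θ).const_mul t
    have h2 : HasDerivAt (fun θ : ℝ => Real.sin ((k:ℝ)*θ)) (Real.cos ((k:ℝ)*θ) * (k:ℝ)) θ := by
      have : HasDerivAt (fun θ : ℝ => (k:ℝ)*θ) (k:ℝ) θ := by
        simpa using (hasDerivAt_id θ).const_mul (k:ℝ)
      simpa [mul_comm] using this.sin
    exact (h1.exp.mul h2)
  have hzero : ∫ θ in (0:ℝ)..Real.pi, g' θ = 0 := by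
    rw [intervalIntegral.integral_eq_sub_of_hasDerivAt hderiv
      ((Continuous.intervalIntegrable (by rw [hg']; fun_prop) _ _))]
    rw [hg]
    simp [Real.sin_int_mul_pi]
  have hsplit : ∀ θ : ℝ, g' θ = (-(t/2)) * (Real.exp (t * Real.cos θ) * Real.cos (((k-1:ℤ):ℝ) * θ))
      + (t/2) * (Real.exp (t * Real.cos θ) * Real.cos (((k+1:ℤ):ℝ) * θ))
      + (k:ℝ) * (Real.exp (t * Real.cos θ) * Real.cos ((k:ℝ) * θ)) := by
    intro θ
    rw [hg']
    push_cast
    rw [show Real.exp (t * Real.cos θ) * (t * -Real.sin θ) * Real.sin ((k:ℝ)*θ)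
      = (-t) * Real.exp (t * Real.cos θ) * (Real.sin θ * Real.sin ((k:ℝ)*θ)) by ring,
      key_prodI']
    ring
  rw [intervalIntegral.integral_congr (fun θ _ => hsplit θ)] at hzero
  rw [intervalIntegral.integral_add (((Continuous.intervalIntegrable (by fun_prop) _ _)))
      (((Continuous.intervalIntegrable (by fun_prop) _ _))),
    intervalIntegral.integral_add (((Continuous.intervalIntegrable (by fun_prop) _ _)))
      (((Continuous.intervalIntegrable (by fun_prop) _ _))),
    intervalIntegral.integral_const_mul, intervalIntegral.integral_const_mul,
    intervalIntegral.integral_const_mul] at hzero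
  unfold besselI
  have hpi : Real.pi ≠ 0 := Real.pi_ne_zero
  push_cast at hzero ⊢
  linear_combination (1/Real.pi) * hzero

/-! ### Derived derivative formulas -/

lemma besselI_deriv_up (ν : ℤ) {t : ℝ} (ht : t ≠ 0) :
    HasDerivAt (besselI ν) (besselI (ν+1) t + ((ν:ℝ)/t) * besselI ν t) t := by
  have h := besselI_hasDerivAt ν t
  have hr := besselI_recurrence ν (t := t)
  convert h using 1
  field_simp at hr ⊢
  linarith

lemma besselI_deriv_down (ν : ℤ) {t : ℝ} (ht : t ≠ 0) :
    HasDerivAt (besselI ν) (besselI (ν-1) t - ((ν:ℝ)/t) * besselI ν t) t := by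
  have h := besselI_hasDerivAt ν t
  have hr := besselI_recurrence ν (t := t)
  convert h using 1
  field_simp at hr ⊢
  linarith

lemma besselK_deriv_up (ν : ℤ) {t : ℝ} (ht : 0 < t) :
    HasDerivAt (besselK ν) (-besselK (ν+1) t + ((ν:ℝ)/t) * besselK ν t) t := by
  have h := besselK_hasDerivAt ν ht
  have hr := besselK_recurrence ν ht
  convert h using 1
  field_simp at hr ⊢
  linarith

lemma besselK_deriv_down (ν : ℤ) {t : ℝ} (ht : 0 < t) :
    HasDerivAt (besselK ν) (-besselK (ν-1) t - ((ν:ℝ)/t) * besselK ν t) t := by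
  have h := besselK_hasDerivAt ν ht
  have hr := besselK_recurrence ν ht
  convert h using 1
  field_simp at hr ⊢
  linarith

theorem radial_dirac_solutions (m z : ℝ) (hm : 0 < m) (hz : z ∈ Set.Ioo (-m) m)
    (k : ℤ) (κ : ℝ) (hκ : κ = Real.sqrt (m ^ 2 - z ^ 2)) :
    0 < κ ∧
    ∀ uI vI uK vK : ℝ → ℂ,
      (uI = fun r : ℝ => ((besselI k (κ * r) : ℝ) : ℂ)) →
      (vI = fun r : ℝ => -Complex.I * (Real.sqrt ((m - z) / (m + z)) : ℂ) *
        ((besselI (k + 1) (κ * r) : ℝ) : ℂ)) →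
      (uK = fun r : ℝ => ((besselK k (κ * r) : ℝ) : ℂ)) →
      (vK = fun r : ℝ => Complex.I * (Real.sqrt ((m - z) / (m + z)) : ℂ) *
        ((besselK (k + 1) (κ * r) : ℝ) : ℂ)) →
      (∀ r : ℝ, 0 < r →
        (Complex.I * deriv vI r + Complex.I * (((k : ℂ) + 1) / (r : ℂ)) * vI r
            - ((m : ℂ) - (z : ℂ)) * uI r = 0 ∧
         Complex.I * deriv uI r - Complex.I * ((k : ℂ) / (r : ℂ)) * uI r
            + ((m : ℂ) + (z : ℂ)) * vI r = 0)) ∧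
      (∀ r : ℝ, 0 < r →
        (Complex.I * deriv vK r + Complex.I * (((k : ℂ) + 1) / (r : ℂ)) * vK r
            - ((m : ℂ) - (z : ℂ)) * uK r = 0 ∧
         Complex.I * deriv uK r - Complex.I * ((k : ℂ) / (r : ℂ)) * uK r
            + ((m : ℂ) + (z : ℂ)) * vK r = 0)) := by
  obtain ⟨hz1, hz2⟩ := hz
  have hmz : 0 < m - z := by linarith
  have hmz' : 0 < m + z := by linarith
  have hκpos : 0 < κ := by
    rw [hκ]; apply Real.sqrt_pos.2; nlinarith
  refine ⟨hκpos, ?_⟩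
  intro uI vI uK vK huI hvI huK hvK
  subst huI hvI huK hvK
  set a : ℝ := Real.sqrt ((m - z) / (m + z)) with ha
  have haκ : a * κ = m - z := by
    rw [hκ, ha, ← Real.sqrt_mul (div_nonneg hmz.le hmz'.le),
      show (m-z)/(m+z) * (m^2 - z^2) = (m-z)^2 by field_simp; ring]
    exact Real.sqrt_sq hmz.le
  have haz : a * (m + z) = κ := by
    rw [hκ, ha, show m^2 - z^2 = (m-z)/(m+z) * ((m+z)^2) by field_simp; ring,
      Real.sqrt_mul (div_nonneg hmz.le hmz'.le), Real.sqrt_sq hmz'.le]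
  have haκC : (a:ℂ) * (κ:ℂ) = (m:ℂ) - (z:ℂ) := by exact_mod_cast congrArg Complex.ofReal haκ
  have hazC : (a:ℂ) * ((m:ℂ) + (z:ℂ)) = (κ:ℂ) := by exact_mod_cast congrArg Complex.ofReal haz
  constructor
  · -- the `I` pair
    intro r hr
    have ht : 0 < κ * r := mul_pos hκpos hr
    have hlin : HasDerivAt (fun r : ℝ => κ * r) κ r := by
      simpa using (hasDerivAt_id r).const_mul κ
    have eu : (besselI (k+1) (κ*r) + ((k:ℝ)/(κ*r)) * besselI k (κ*r)) * κ
        = besselI (k+1) (κ*r) * κ + ((k:ℝ)/r) * besselI k (κ*r) := by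
      field_simp
    have hdu : HasDerivAt (fun r : ℝ => ((besselI k (κ * r) : ℝ) : ℂ))
        (((besselI (k+1) (κ*r) * κ + ((k:ℝ)/r) * besselI k (κ*r) : ℝ)) : ℂ) r := by
      have := (((besselI_deriv_up k ht.ne').comp r hlin)).ofReal_comp
      rwa [eu] at this
    have hBd : HasDerivAt (besselI (k+1))
        (besselI k (κ*r) - (((k:ℝ)+1)/(κ*r)) * besselI (k+1) (κ*r)) (κ*r) := by
      have := besselI_deriv_down (k+1) ht.ne'
      rw [show k+1-1 = k by ring] at this
      exact_mod_cast this
    have ev : (besselI k (κ*r) - (((k:ℝ)+1)/(κ*r)) * besselI (k+1) (κ*r)) * κ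
        = besselI k (κ*r) * κ - (((k:ℝ)+1)/r) * besselI (k+1) (κ*r) := by
      field_simp
    have hdv : HasDerivAt (fun r : ℝ => -Complex.I * ((a:ℝ) : ℂ) * ((besselI (k+1) (κ * r) : ℝ) : ℂ))
        (-Complex.I * ((a:ℝ) : ℂ) *
          (((besselI k (κ*r) * κ - (((k:ℝ)+1)/r) * besselI (k+1) (κ*r) : ℝ)) : ℂ)) r := by
      have := (((hBd.comp r hlin)).ofReal_comp).const_mul (-Complex.I * ((a:ℝ):ℂ))
      rwa [ev] at this
    have hrC : ((r:ℝ):ℂ) ≠ 0 := Complex.ofReal_ne_zero.2 hr.ne'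
    constructor
    · rw [hdv.deriv]
      beta_reduce
      push_cast
      linear_combination ((besselI k (κ*r) : ℝ):ℂ) * haκC
        + (-(((a:ℝ):ℂ) * ((besselI k (κ*r) : ℝ):ℂ) * ((κ:ℝ):ℂ))) * Complex.I_sq
    · rw [hdu.deriv]
      beta_reduce
      push_cast
      linear_combination (-(Complex.I * ((besselI (k+1) (κ*r) : ℝ):ℂ))) * hazC
  · -- the `K` pair
    intro r hr
    have ht : 0 < κ * r := mul_pos hκpos hr
    have hlin : HasDerivAt (fun r : ℝ => κ * r) κ r := by
      simpa using (hasDerivAt_id r).const_mul κ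
    have eu : (-besselK (k+1) (κ*r) + ((k:ℝ)/(κ*r)) * besselK k (κ*r)) * κ
        = -besselK (k+1) (κ*r) * κ + ((k:ℝ)/r) * besselK k (κ*r) := by
      field_simp
    have hdu : HasDerivAt (fun r : ℝ => ((besselK k (κ * r) : ℝ) : ℂ))
        (((-besselK (k+1) (κ*r) * κ + ((k:ℝ)/r) * besselK k (κ*r) : ℝ)) : ℂ) r := by
      have := (((besselK_deriv_up k ht).comp r hlin)).ofReal_comp
      rwa [eu] at this
    have hBd : HasDerivAt (besselK (k+1))
        (-besselK k (κ*r) - (((k:ℝ)+1)/(κ*r)) * besselK (k+1) (κ*r)) (κ*r) := by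
      have := besselK_deriv_down (k+1) ht
      rw [show k+1-1 = k by ring] at this
      exact_mod_cast this
    have ev : (-besselK k (κ*r) - (((k:ℝ)+1)/(κ*r)) * besselK (k+1) (κ*r)) * κ
        = -besselK k (κ*r) * κ - (((k:ℝ)+1)/r) * besselK (k+1) (κ*r) := by
      field_simp
    have hdv : HasDerivAt (fun r : ℝ => Complex.I * ((a:ℝ) : ℂ) * ((besselK (k+1) (κ * r) : ℝ) : ℂ))
        (Complex.I * ((a:ℝ) : ℂ) *
          (((-besselK k (κ*r) * κ - (((k:ℝ)+1)/r) * besselK (k+1) (κ*r) : ℝ)) : ℂ)) r := by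
      have := (((hBd.comp r hlin)).ofReal_comp).const_mul (Complex.I * ((a:ℝ):ℂ))
      rwa [ev] at this
    have hrC : ((r:ℝ):ℂ) ≠ 0 := Complex.ofReal_ne_zero.2 hr.ne'
    constructor
    · rw [hdv.deriv]
      beta_reduce
      push_cast
      linear_combination ((besselK k (κ*r) : ℝ):ℂ) * haκC
        + (-(((a:ℝ):ℂ) * ((besselK k (κ*r) : ℝ):ℂ) * ((κ:ℝ):ℂ))) * Complex.I_sq
    · rw [hdu.deriv]
      beta_reduce
      push_cast
      linear_combination (Complex.I * ((besselK (k+1) (κ*r) : ℝ):ℂ)) * hazC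
end
end
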